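/- If a Snort position H is the disjoint union of two components G and G', where G' is isomorphic to G as a tinted graph except that some vertices of G' additionally carry a tint in the second player's colour (restricting only the first player's moves there), then H is a second-player win: the second player wins by copying each of the first player's moves in the opposite component. -/

import Mathlib

/-- A generalized Snort position: a simple graph, a partial colouring
(`some true` = blue = Left, `some false` = red = Right), and tints:
`tintB v` means `v` is reserved for Left (forbidden to Right), and
`tintR v` means `v` is reserved for Right (forbidden to Left). -/
structure TSnortPos (V : Type) where
  graph : SimpleGraph V
  color : V → Option Bool
  tintB : V → Prop
  tintR : V → Prop

/-- Left's legal moves: colour blue an uncolored, not red-tinted vertex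
having no red neighbour. -/
def TLeftMove {V : Type} (p q : TSnortPos V) : Prop :=
  q.graph = p.graph ∧ q.tintB = p.tintB ∧ q.tintR = p.tintR ∧
  ∃ v, p.color v = none ∧ ¬ p.tintR v ∧
    (∀ w, p.graph.Adj v w → p.color w ≠ some false) ∧
    q.color v = some true ∧ ∀ w, w ≠ v → q.color w = p.color w

/-- Right's legal moves: colour red an uncolored, not blue-tinted vertex
having no blue neighbour. -/
def TRightMove {V : Type} (p q : TSnortPos V) : Prop :=
  q.graph = p.graph ∧ q.tintB = p.tintB ∧ q.tintR = p.tintR ∧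
  ∃ v, p.color v = none ∧ ¬ p.tintB v ∧
    (∀ w, p.graph.Adj v w → p.color w ≠ some true) ∧
    q.color v = some false ∧ ∀ w, w ≠ v → q.color w = p.color w

mutual
  inductive TLeftWinsFirst {V : Type} : TSnortPos V → Prop
    | intro (p q : TSnortPos V) (h : TLeftMove p q) (hq : TLeftWinsSecond q) :
        TLeftWinsFirst p
  inductive TLeftWinsSecond {V : Type} : TSnortPos V → Prop
    | intro (p : TSnortPos V) (h : ∀ q, TRightMove p q → TLeftWinsFirst q) :
        TLeftWinsSecond p
end

mutual
  inductive TRightWinsFirst {V : Type} : TSnortPos V → Prop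
    | intro (p q : TSnortPos V) (h : TRightMove p q) (hq : TRightWinsSecond q) :
        TRightWinsFirst p
  inductive TRightWinsSecond {V : Type} : TSnortPos V → Prop
    | intro (p : TSnortPos V) (h : ∀ q, TLeftMove p q → TRightWinsFirst q) :
        TRightWinsSecond p
end

/-- The disjoint union of two copies of a graph `G`. -/
def doubleGraph {V : Type} (G : SimpleGraph V) : SimpleGraph (V ⊕ V) where
  Adj := fun a b =>
    match a, b with
    | Sum.inl a, Sum.inl b => G.Adj a b
    | Sum.inr a, Sum.inr b => G.Adj a b
    | _, _ => False
  symm := by constructor; rintro (a | a) (b | b) h <;> simp_all <;> exact G.adj_symm h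
  loopless := by constructor; rintro (a | a) h <;> simp_all

namespace SnortCopycatAux

variable {V : Type}

/-- Swap the two components of a disjoint union. -/
def swapV : V ⊕ V → V ⊕ V := Sum.elim Sum.inr Sum.inl

@[simp] lemma swap_swap (x : V ⊕ V) : swapV (swapV x) = x := by cases x <;> rfl

lemma swap_ne (x : V ⊕ V) : swapV x ≠ x := by cases x <;> simp [swapV]

lemma swap_inj {x y : V ⊕ V} (h : swapV x = swapV y) : x = y := by
  have := congrArg swapV h; simpa using this

lemma adj_swap (G : SimpleGraph V) (a b : V ⊕ V) :
    (doubleGraph G).Adj (swapV a) (swapV b) ↔ (doubleGraph G).Adj a b := by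
  cases a <;> cases b <;> simp [swapV, doubleGraph]

lemma adj_ne_swap {G : SimpleGraph V} {v w : V ⊕ V}
    (h : (doubleGraph G).Adj (swapV v) w) : w ≠ v := by
  cases v <;> cases w <;> simp [swapV, doubleGraph] at h ⊢

lemma map_not_ne {o : Option Bool} {b : Bool} (h : o ≠ some b) :
    Option.map not o ≠ some (!b) := by
  cases o with
  | none => simp
  | some c => cases c <;> cases b <;> simp_all

/-- Invariant for the case where the extra (blue) tints restrict Right. -/
def InvL (G : SimpleGraph V) (T : V → Prop) (p : TSnortPos (V ⊕ V)) : Prop :=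
  p.graph = doubleGraph G ∧ p.tintB = Sum.elim (fun _ => False) T ∧
  p.tintR = (fun _ => False) ∧
  ∀ x, p.color (swapV x) = Option.map not (p.color x)

/-- Invariant for the case where the extra (red) tints restrict Left. -/
def InvR (G : SimpleGraph V) (T : V → Prop) (p : TSnortPos (V ⊕ V)) : Prop :=
  p.graph = doubleGraph G ∧ p.tintB = (fun _ => False) ∧
  p.tintR = Sum.elim (fun _ => False) T ∧
  ∀ x, p.color (swapV x) = Option.map not (p.color x)

lemma stepL {G : SimpleGraph V} {T : V → Prop} {p q : TSnortPos (V ⊕ V)}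
    (hp : InvL G T p) (hm : TRightMove p q) :
    ∃ r, TLeftMove q r ∧ InvL G T r ∧
      {x | r.color x = none} ⊂ {x | p.color x = none} := by
  classical
  obtain ⟨hg, hb, hr, v, hv0, hvB, hadj, hqv, hqw⟩ := hm
  obtain ⟨pg, pb, pr, pc⟩ := hp
  refine ⟨⟨q.graph, fun x => if x = swapV v then some true else q.color x,
      q.tintB, q.tintR⟩, ⟨rfl, rfl, rfl, swapV v, ?_, ?_, ?_, ?_, ?_⟩, ?_, ?_⟩
  · rw [hqw _ (swap_ne v)]
    have := pc v
    rw [hv0] at this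
    exact this
  · rw [hr, pr]; exact not_false
  · intro w hw
    rw [hg, pg] at hw
    have hwv : w ≠ v := adj_ne_swap hw
    have hadj' : (doubleGraph G).Adj v (swapV w) :=
      (adj_swap G v (swapV w)).mp (by rwa [swap_swap])
    have h1 : p.color (swapV w) ≠ some true := hadj (swapV w) (by rw [pg]; exact hadj')
    have h2 : p.color w = Option.map not (p.color (swapV w)) := by
      have := pc (swapV w); rwa [swap_swap] at this
    simp only [hqw _ hwv, h2]
    exact map_not_ne h1
  · simp
  · intro w hwne; simp [hwne]
  · refine ⟨by rw [hg, pg], by rw [hb, pb], by rw [hr, pr], ?_⟩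
    intro x
    dsimp only
    have hne : ¬ (v = swapV v) := fun h => swap_ne v h.symm
    by_cases hx : x = v
    · subst hx
      rw [if_pos rfl, if_neg hne, hqv]
      rfl
    · by_cases hx2 : x = swapV v
      · subst hx2
        rw [swap_swap, if_neg hne, if_pos rfl, hqv]
        rfl
      · have h1 : swapV x ≠ swapV v := fun h => hx (swap_inj h)
        have h2 : swapV x ≠ v := fun h => hx2 (by rw [← h, swap_swap])
        simp only [if_neg h1, if_neg hx2, hqw _ h2,
          hqw _ hx, pc x]
  · constructor
    · intro x hx
      simp only [Set.mem_setOf_eq] at hx ⊢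
      by_cases h1 : x = swapV v
      · rw [if_pos h1] at hx; exact absurd hx (by simp)
      · rw [if_neg h1] at hx
        by_cases h2 : x = v
        · subst h2; rw [hqv] at hx; exact absurd hx (by simp)
        · rwa [hqw _ h2] at hx
    · intro hsub
      have hv : v ∈ {x | p.color x = none} := hv0
      have := hsub hv
      simp only [Set.mem_setOf_eq,
        if_neg (fun h : v = swapV v => swap_ne v h.symm)] at this
      rw [hqv] at this
      exact absurd this (by simp)

lemma stepR {G : SimpleGraph V} {T : V → Prop} {p q : TSnortPos (V ⊕ V)}
    (hp : InvR G T p) (hm : TLeftMove p q) :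
    ∃ r, TRightMove q r ∧ InvR G T r ∧
      {x | r.color x = none} ⊂ {x | p.color x = none} := by
  classical
  obtain ⟨hg, hb, hr, v, hv0, hvR, hadj, hqv, hqw⟩ := hm
  obtain ⟨pg, pb, pr, pc⟩ := hp
  refine ⟨⟨q.graph, fun x => if x = swapV v then some false else q.color x,
      q.tintB, q.tintR⟩, ⟨rfl, rfl, rfl, swapV v, ?_, ?_, ?_, ?_, ?_⟩, ?_, ?_⟩
  · rw [hqw _ (swap_ne v)]
    have := pc v
    rw [hv0] at this
    exact this
  · rw [hb, pb]; exact not_false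
  · intro w hw
    rw [hg, pg] at hw
    have hwv : w ≠ v := adj_ne_swap hw
    have hadj' : (doubleGraph G).Adj v (swapV w) :=
      (adj_swap G v (swapV w)).mp (by rwa [swap_swap])
    have h1 : p.color (swapV w) ≠ some false := hadj (swapV w) (by rw [pg]; exact hadj')
    have h2 : p.color w = Option.map not (p.color (swapV w)) := by
      have := pc (swapV w); rwa [swap_swap] at this
    simp only [hqw _ hwv, h2]
    exact map_not_ne h1
  · simp
  · intro w hwne; simp [hwne]
  · refine ⟨by rw [hg, pg], by rw [hb, pb], by rw [hr, pr], ?_⟩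
    intro x
    dsimp only
    have hne : ¬ (v = swapV v) := fun h => swap_ne v h.symm
    by_cases hx : x = v
    · subst hx
      rw [if_pos rfl, if_neg hne, hqv]
      rfl
    · by_cases hx2 : x = swapV v
      · subst hx2
        rw [swap_swap, if_neg hne, if_pos rfl, hqv]
        rfl
      · have h1 : swapV x ≠ swapV v := fun h => hx (swap_inj h)
        have h2 : swapV x ≠ v := fun h => hx2 (by rw [← h, swap_swap])
        simp only [if_neg h1, if_neg hx2, hqw _ h2,
          hqw _ hx, pc x]
  · constructor
    · intro x hx
      simp only [Set.mem_setOf_eq] at hx ⊢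
      by_cases h1 : x = swapV v
      · rw [if_pos h1] at hx; exact absurd hx (by simp)
      · rw [if_neg h1] at hx
        by_cases h2 : x = v
        · subst h2; rw [hqv] at hx; exact absurd hx (by simp)
        · rwa [hqw _ h2] at hx
    · intro hsub
      have hv : v ∈ {x | p.color x = none} := hv0
      have := hsub hv
      simp only [Set.mem_setOf_eq,
        if_neg (fun h : v = swapV v => swap_ne v h.symm)] at this
      rw [hqv] at this
      exact absurd this (by simp)

lemma winL [Fintype V] (G : SimpleGraph V) (T : V → Prop) :
    ∀ (n : ℕ) (p : TSnortPos (V ⊕ V)), {x | p.color x = none}.ncard = n →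
      InvL G T p → TLeftWinsSecond p := by
  intro n
  induction n using Nat.strong_induction_on with
  | _ n ih =>
    intro p hn hp
    constructor
    intro q hq
    obtain ⟨r, hmv, hinv, hsub⟩ := stepL hp hq
    have hlt : {x | r.color x = none}.ncard < n := by
      rw [← hn]; exact Set.ncard_lt_ncard hsub (Set.toFinite _)
    exact TLeftWinsFirst.intro q r hmv (ih _ hlt r rfl hinv)

lemma winR [Fintype V] (G : SimpleGraph V) (T : V → Prop) :
    ∀ (n : ℕ) (p : TSnortPos (V ⊕ V)), {x | p.color x = none}.ncard = n →
      InvR G T p → TRightWinsSecond p := by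
  intro n
  induction n using Nat.strong_induction_on with
  | _ n ih =>
    intro p hn hp
    constructor
    intro q hq
    obtain ⟨r, hmv, hinv, hsub⟩ := stepR hp hq
    have hlt : {x | r.color x = none}.ncard < n := by
      rw [← hn]; exact Set.ncard_lt_ncard hsub (Set.toFinite _)
    exact TRightWinsFirst.intro q r hmv (ih _ hlt r rfl hinv)

end SnortCopycatAux

/-- Copycat proposition for Snort (Proposition `thm:symmetry`): if a position
`H` is a disjoint union of `G` and `G'`, where `G'` is isomorphic to `G`
except that some vertices of `G'` carry an additional tint in the second
player's colour, then `H` is a second-player win (the second player copies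
each move of the first player in the other component). -/
theorem snort_copycat_tinted {V : Type} [Fintype V] (G : SimpleGraph V)
    (T : V → Prop) :
    -- if the extra tints on the second copy are blue (restricting Right, the
    -- first player), then Left wins moving second:
    TLeftWinsSecond
      ⟨doubleGraph G, fun _ => none,
        Sum.elim (fun _ => False) T, fun _ => False⟩ ∧
    -- symmetrically, with extra red tints Right wins moving second:
    TRightWinsSecond
      ⟨doubleGraph G, fun _ => none,
        fun _ => False, Sum.elim (fun _ => False) T⟩ := by
  exact ⟨SnortCopycatAux.winL G T _ _ rfl ⟨rfl, rfl, rfl, fun x => rfl⟩,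
    SnortCopycatAux.winR G T _ _ rfl ⟨rfl, rfl, rfl, fun x => rfl⟩⟩
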